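/- Let X and Y be vector spaces over ℝ and let f : X → Y satisfy: (i) f(0) = 0, and (ii) for all a, b ∈ X with a ≠ b and f(a) ≠ f(b), all c ∈ X, and all r, s ∈ ℝ with r + s ≠ 0, if c divides the segment from a to b in ratio r : s then f(c) divides the segment from f(a) to f(b) in ratio r : s. Then f is ℝ-linear. -/

import Mathlib

/-- `c` divides the segment from `a` to `b` in ratio `r : s`. -/
def DividesInRatio {X : Type*} [AddCommGroup X] [Module ℝ X]
    (a b c : X) (r s : ℝ) : Prop :=
  c = (r / (r + s)) • (b - a) + a

theorem linear_of_ratio_preserving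
    {X Y : Type*} [AddCommGroup X] [Module ℝ X] [AddCommGroup Y] [Module ℝ Y]
    (f : X → Y) (h0 : f 0 = 0)
    (hdiv : ∀ (a b c : X) (r s : ℝ), a ≠ b → f a ≠ f b → r + s ≠ 0 →
      DividesInRatio a b c r s → DividesInRatio (f a) (f b) (f c) r s) :
    (∀ (c : ℝ) (a : X), f (c • a) = c • f a) ∧
      (∀ a b : X, f (a + b) = f a + f b) := by
  have twosmul : ∀ y : Y, (2 : ℝ) • y = 0 → y = 0 := by
    intro y hy
    have h := congrArg (fun z => (2 : ℝ)⁻¹ • z) hy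
    simp only [smul_smul, smul_zero] at h
    norm_num at h
    exact h
  -- Key lemma: ratio preservation in convenient form
  have key : ∀ (a b : X) (t : ℝ), a ≠ b → f a ≠ f b →
      f (t • (b - a) + a) = t • (f b - f a) + f a := by
    intro a b t hab hfab
    have hsum : t + (1 - t) ≠ 0 := by ring_nf; norm_num
    have hd : DividesInRatio a b (t • (b - a) + a) t (1 - t) := by
      rw [DividesInRatio]
      norm_num
    have h := hdiv a b (t • (b - a) + a) t (1 - t) hab hfab hsum hd
    rw [DividesInRatio] at h
    rw [h]
    norm_num
  -- Homogeneity when f a ≠ 0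
  have hom1 : ∀ (a : X) (t : ℝ), f a ≠ 0 → f (t • a) = t • f a := by
    intro a t ha
    have hane : (0 : X) ≠ a := by
      rintro rfl; exact ha h0
    have hfne : f 0 ≠ f a := by rw [h0]; exact fun h => ha h.symm
    have h := key 0 a t hane hfne
    rw [h0] at h
    simpa using h
  -- Full homogeneity
  have hom : ∀ (c : ℝ) (a : X), f (c • a) = c • f a := by
    intro c a
    by_cases ha : f a = 0
    · rw [ha, smul_zero]
      by_cases hc : c = 0
      · simp [hc, h0]
      · by_contra hfca
        have h2 := hom1 (c • a) c⁻¹ hfca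
        rw [smul_smul, inv_mul_cancel₀ hc, one_smul, ha] at h2
        apply hfca
        have h3 : c • ((0 : Y)) = c • (c⁻¹ • f (c • a)) := by rw [← h2]
        rw [smul_smul, mul_inv_cancel₀ hc, one_smul, smul_zero] at h3
        exact h3.symm
    · exact hom1 a c ha
  refine ⟨hom, ?_⟩
  intro a b
  by_cases hab : a = b
  · subst hab
    have h := hom 2 a
    rw [two_smul, two_smul] at h
    exact h
  by_cases hf : f a = f b
  · -- a ≠ b but f a = f b
    by_cases hv : f a = 0
    · -- both images zero
      by_cases ha0 : a = 0
      · simp [ha0, hv, h0]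
      by_cases hb0 : b = 0
      · simp [hb0, hf ▸ hv, hv, h0]
      by_cases hw : f (a + b) = 0
      · rw [hw, hv, ← hf, hv, add_zero]
      · -- derive contradiction
        exfalso
        have hne1 : a ≠ a + b := fun h => hb0 (left_eq_add.mp h)
        have hfne1 : f a ≠ f (a + b) := by rw [hv]; exact fun h => hw h.symm
        have e1 := key a (a + b) (-1) hne1 hfne1
        have p1 : (-1 : ℝ) • ((a + b) - a) + a = a - b := by module
        rw [p1, hv] at e1
        have e1' : f (a - b) = -f (a + b) := by rw [e1]; module
        have hne2 : b ≠ a + b := fun h => ha0 (right_eq_add.mp h)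
        have hfne2 : f b ≠ f (a + b) := by rw [← hf, hv]; exact fun h => hw h.symm
        have e2 := key b (a + b) (-1) hne2 hfne2
        have p2 : (-1 : ℝ) • ((a + b) - b) + b = b - a := by module
        rw [p2, ← hf, hv] at e2
        have e2' : f (b - a) = -f (a + b) := by rw [e2]; module
        have e3 : f (a - b) = -f (b - a) := by
          have h := hom (-1) (b - a)
          have p3 : (-1 : ℝ) • (b - a) = a - b := by module
          rw [p3, neg_one_smul] at h
          exact h
        rw [e1', e2'] at e3
        apply hw
        apply twosmul
        linear_combination (norm := module) -e3
    · -- f a = f b = v ≠ 0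
      have hfneg : f (-a) = -f a := by
        have h := hom (-1) a
        rw [neg_one_smul, neg_one_smul] at h
        exact h
      have hva : f a ≠ -f a := by
        intro h
        apply hv
        apply twosmul
        linear_combination (norm := module) h
      have hne1 : (-a : X) ≠ b := by
        intro h
        apply hva
        nth_rewrite 1 [hf]
        rw [← h]
        exact hfneg
      have hfne1 : f (-a) ≠ f b := by
        rw [hfneg, ← hf]; exact fun h => hva h.symm
      -- midpoint of -a and b: f((1/2)(b-a)) = 0
      have e1 := key (-a) b (1/2 : ℝ) hne1 hfne1
      have p1 : (1/2 : ℝ) • (b - (-a)) + (-a) = (1/2 : ℝ) • (b - a) := by module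
      rw [p1, hfneg, ← hf] at e1
      have e1' : f ((1/2 : ℝ) • (b - a)) = 0 := by rw [e1]; module
      have hba : f (b - a) = 0 := by
        have h2 := hom 2 ((1/2 : ℝ) • (b - a))
        rw [e1', smul_zero, smul_smul] at h2
        norm_num at h2
        exact h2
      -- segment from 2a to b - a, midpoint (1/2)(a+b)
      have h2a : f ((2 : ℝ) • a) = (2 : ℝ) • f a := hom 2 a
      have hne2 : (2 : ℝ) • a ≠ b - a := by
        intro h
        have hb3 : b = (3 : ℝ) • a := by linear_combination (norm := module) -h
        have h3 : f a = (3 : ℝ) • f a := by nth_rewrite 1 [hf]; rw [hb3, hom]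
        apply hv
        apply twosmul
        linear_combination (norm := module) -h3
      have hfne2 : f ((2 : ℝ) • a) ≠ f (b - a) := by
        rw [h2a, hba]
        exact fun h => hv (twosmul _ h)
      have e2 := key ((2 : ℝ) • a) (b - a) (1/2 : ℝ) hne2 hfne2
      have p2 : (1/2 : ℝ) • ((b - a) - (2 : ℝ) • a) + (2 : ℝ) • a = (1/2 : ℝ) • (a + b) := by
        module
      rw [p2, h2a, hba] at e2
      have e2' : f ((1/2 : ℝ) • (a + b)) = f a := by rw [e2]; module
      have h3 := hom 2 ((1/2 : ℝ) • (a + b))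
      rw [e2', smul_smul] at h3
      norm_num at h3
      rw [h3, ← hf, two_smul]
  · -- f a ≠ f b
    have e1 := key a b (1/2 : ℝ) hab hf
    have p1 : (1/2 : ℝ) • (b - a) + a = (1/2 : ℝ) • (a + b) := by module
    rw [p1] at e1
    have h3 := hom 2 ((1/2 : ℝ) • (a + b))
    rw [e1, smul_smul] at h3
    norm_num at h3
    rw [h3]
    module
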